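/- Let Λ ∈ ℂ, let x_1,…,x_n ∈ ℂ be pairwise distinct, let y_1,…,y_m ∈ ℂ be pairwise distinct, and suppose x_i ≠ y_j for all i, j. Set p = ∏_{i=1}^n (X − x_i) and q = ∏_{j=1}^m (X − y_j) in ℂ[X]. Then {p,q}_Λ = 0 (as a polynomial identity) if and only if the following equilibrium conditions hold: for every i, ∑_{k≠i} 1/(x_i − x_k) − Λ·∑_{j=1}^m 1/(x_i − y_j) = 0, and for every j, Λ²·∑_{l≠j} 1/(y_j − y_l) − Λ·∑_{i=1}^n 1/(y_j − x_i) = 0. (These are exactly the critical-point equations for the Coulomb energy E = ∑_{i<j} Q_i Q_j ln|z_i − z_j| of n charges of value 1 at the x_i and m charges of value −Λ at the y_j.) -/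

import Mathlib

open Polynomial Finset

private lemma erase_erase_comm {ι : Type*} [DecidableEq ι] (s : Finset ι) (a b : ι) :
    (s.erase a).erase b = (s.erase b).erase a := by
  ext c; simp only [Finset.mem_erase]; tauto

private lemma derivative_finset_prod {R : Type*} [CommRing R] {ι : Type*} [DecidableEq ι]
    (s : Finset ι) (f : ι → R[X]) :
    derivative (∏ i ∈ s, f i) = ∑ i ∈ s, (∏ k ∈ s.erase i, f k) * derivative (f i) := by
  induction s using Finset.induction_on with
  | empty => simp
  | @insert a s h ih =>
    have hsum : ∑ i ∈ s, (∏ k ∈ (insert a s).erase i, f k) * derivative (f i)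
        = f a * ∑ i ∈ s, (∏ k ∈ s.erase i, f k) * derivative (f i) := by
      rw [Finset.mul_sum]
      refine Finset.sum_congr rfl fun i hi => ?_
      rw [Finset.erase_insert_of_ne (fun hia => h (by rw [hia]; exact hi)),
        Finset.prod_insert (fun ha => h (Finset.mem_of_mem_erase ha)), mul_assoc]
    rw [Finset.sum_insert h, Finset.erase_insert h, hsum, ← ih, Finset.prod_insert h,
      derivative_mul]
    ring

private lemma eval_deriv_prod {ι : Type*} [DecidableEq ι] (s : Finset ι) (f : ι → ℂ) (a : ℂ) :
    eval a (derivative (∏ i ∈ s, (X - C (f i)))) =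
      ∑ i ∈ s, ∏ k ∈ s.erase i, (a - f k) := by
  simp [derivative_finset_prod, eval_finset_sum, eval_prod]

private lemma eval_deriv2_prod {ι : Type*} [DecidableEq ι] (s : Finset ι) (f : ι → ℂ) (a : ℂ) :
    eval a (derivative (derivative (∏ i ∈ s, (X - C (f i))))) =
      ∑ b ∈ s, ∑ c ∈ s.erase b, ∏ d ∈ (s.erase b).erase c, (a - f d) := by
  rw [derivative_finset_prod]
  simp [derivative_sum, derivative_finset_prod, eval_finset_sum, eval_prod]

private lemma eval_deriv_at_root {ι : Type*} [DecidableEq ι] (s : Finset ι) (f : ι → ℂ)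
    {i : ι} (hi : i ∈ s) :
    eval (f i) (derivative (∏ k ∈ s, (X - C (f k)))) = ∏ k ∈ s.erase i, (f i - f k) := by
  rw [eval_deriv_prod]
  refine Finset.sum_eq_single_of_mem i hi fun b hb hbi => ?_
  exact Finset.prod_eq_zero (Finset.mem_erase.mpr ⟨Ne.symm hbi, hi⟩) (sub_self _)

private lemma eval_deriv2_at_root {ι : Type*} [DecidableEq ι] (s : Finset ι) (f : ι → ℂ)
    {i : ι} (hi : i ∈ s) :
    eval (f i) (derivative (derivative (∏ k ∈ s, (X - C (f k))))) =
      2 * ∑ c ∈ s.erase i, ∏ d ∈ (s.erase i).erase c, (f i - f d) := by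
  rw [eval_deriv2_prod, ← Finset.add_sum_erase s _ hi]
  have h2 : ∑ b ∈ s.erase i, ∑ c ∈ s.erase b, ∏ d ∈ (s.erase b).erase c, (f i - f d)
      = ∑ b ∈ s.erase i, ∏ d ∈ (s.erase i).erase b, (f i - f d) := by
    refine Finset.sum_congr rfl fun b hb => ?_
    obtain ⟨hbi, hbs⟩ := Finset.mem_erase.mp hb
    rw [Finset.sum_eq_single_of_mem i (Finset.mem_erase.mpr ⟨Ne.symm hbi, hi⟩)]
    · rw [erase_erase_comm]
    · intro c hc hci
      obtain ⟨hcb, hcs⟩ := Finset.mem_erase.mp hc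
      exact Finset.prod_eq_zero
        (Finset.mem_erase.mpr ⟨Ne.symm hci, Finset.mem_erase.mpr ⟨Ne.symm hbi, hi⟩⟩)
        (sub_self _)
  rw [h2, two_mul]

private lemma prod_mul_sum_inv {ι : Type*} [DecidableEq ι] (s : Finset ι) (g : ι → ℂ)
    (hg : ∀ k ∈ s, g k ≠ 0) :
    ∑ k ∈ s, ∏ l ∈ s.erase k, g l = (∏ l ∈ s, g l) * ∑ k ∈ s, 1 / g k := by
  rw [Finset.mul_sum]
  refine Finset.sum_congr rfl fun k hk => ?_
  rw [← Finset.mul_prod_erase s g hk]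
  field_simp [hg k hk]

/-- Equilibrium of `n` charges of value `1` at the `x i` and `m` charges of value `-Λ`
at the `y j` is equivalent to the bilinear equation `{p,q}_Λ = 0` for
`p = ∏ (X - x i)`, `q = ∏ (X - y j)`. -/
theorem charges_equilibrium_iff_bilinear
    (Λ : ℂ) (n m : ℕ) (x : Fin n → ℂ) (y : Fin m → ℂ)
    (hx : Function.Injective x) (hy : Function.Injective y)
    (hxy : ∀ i j, x i ≠ y j)
    (p q : ℂ[X])
    (hp : p = ∏ i, (X - C (x i))) (hq : q = ∏ j, (X - C (y j))) :
    derivative (derivative p) * q - 2 * C Λ * derivative p * derivative q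
        + C Λ ^ 2 * p * derivative (derivative q) = 0 ↔
      ((∀ i, (∑ k ∈ Finset.univ.erase i, 1 / (x i - x k))
          - Λ * ∑ j, 1 / (x i - y j) = 0) ∧
       (∀ j, Λ ^ 2 * (∑ l ∈ Finset.univ.erase j, 1 / (y j - y l))
          - Λ * ∑ i, 1 / (y j - x i) = 0)) := by
  subst hp hq
  set p : ℂ[X] := ∏ i, (X - C (x i)) with hp
  set q : ℂ[X] := ∏ j, (X - C (y j)) with hq
  set E : ℂ[X] := derivative (derivative p) * q - 2 * C Λ * derivative p * derivative q
      + C Λ ^ 2 * p * derivative (derivative q) with hE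
  -- key evaluation facts
  have hpx : ∀ i, eval (x i) p = 0 := fun i => by
    rw [hp, eval_prod]
    exact Finset.prod_eq_zero (Finset.mem_univ i) (by simp)
  have hqy : ∀ j, eval (y j) q = 0 := fun j => by
    rw [hq, eval_prod]
    exact Finset.prod_eq_zero (Finset.mem_univ j) (by simp)
  -- equivalence at the points x i
  have key1 : ∀ i, eval (x i) E = 0 ↔
      (∑ k ∈ Finset.univ.erase i, 1 / (x i - x k)) - Λ * ∑ j, 1 / (x i - y j) = 0 := by
    intro i
    have hBne : (∏ k ∈ Finset.univ.erase i, (x i - x k)) ≠ 0 := by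
      rw [Finset.prod_ne_zero_iff]
      intro k hk
      exact sub_ne_zero.mpr (hx.ne (Ne.symm (Finset.mem_erase.mp hk).1))
    have hQne : (∏ j, (x i - y j)) ≠ 0 := by
      rw [Finset.prod_ne_zero_iff]
      exact fun j _ => sub_ne_zero.mpr (hxy i j)
    have hS : ∑ k ∈ Finset.univ.erase i,
          ∏ l ∈ (Finset.univ.erase i).erase k, (x i - x l)
        = (∏ k ∈ Finset.univ.erase i, (x i - x k))
            * ∑ k ∈ Finset.univ.erase i, 1 / (x i - x k) :=
      prod_mul_sum_inv _ _ (fun k hk =>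
        sub_ne_zero.mpr (hx.ne (Ne.symm (Finset.mem_erase.mp hk).1)))
    have hQ' : ∑ j, ∏ l ∈ Finset.univ.erase j, (x i - y l)
        = (∏ j, (x i - y j)) * ∑ j, 1 / (x i - y j) :=
      prod_mul_sum_inv _ _ (fun j _ => sub_ne_zero.mpr (hxy i j))
    have hev : eval (x i) E =
        (2 * (∏ k ∈ Finset.univ.erase i, (x i - x k)) * ∏ j, (x i - y j))
          * ((∑ k ∈ Finset.univ.erase i, 1 / (x i - x k)) - Λ * ∑ j, 1 / (x i - y j)) := by
      rw [hE]
      simp only [eval_add, eval_sub, eval_mul, eval_pow, eval_C, eval_ofNat,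
        hpx i, mul_zero, zero_mul,
        eval_deriv2_at_root (Finset.univ : Finset (Fin n)) x (Finset.mem_univ i),
        eval_deriv_at_root (Finset.univ : Finset (Fin n)) x (Finset.mem_univ i)]
      rw [hq, eval_prod]
      simp only [eval_sub, eval_X, eval_C]
      rw [eval_deriv_prod (Finset.univ : Finset (Fin m)) y (x i), hp,
        eval_deriv2_at_root (Finset.univ : Finset (Fin n)) x (Finset.mem_univ i),
        eval_deriv_at_root (Finset.univ : Finset (Fin n)) x (Finset.mem_univ i), hS, hQ']
      ring
    rw [hev, mul_eq_zero]
    have hne : (2 * (∏ k ∈ Finset.univ.erase i, (x i - x k)) * ∏ j, (x i - y j)) ≠ 0 :=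
      mul_ne_zero (mul_ne_zero two_ne_zero hBne) hQne
    simp [hne]
  -- equivalence at the points y j
  have key2 : ∀ j, eval (y j) E = 0 ↔
      Λ ^ 2 * (∑ l ∈ Finset.univ.erase j, 1 / (y j - y l)) - Λ * ∑ i, 1 / (y j - x i) = 0 := by
    intro j
    have hBne : (∏ l ∈ Finset.univ.erase j, (y j - y l)) ≠ 0 := by
      rw [Finset.prod_ne_zero_iff]
      intro l hl
      exact sub_ne_zero.mpr (hy.ne (Ne.symm (Finset.mem_erase.mp hl).1))
    have hPne : (∏ i, (y j - x i)) ≠ 0 := by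
      rw [Finset.prod_ne_zero_iff]
      exact fun i _ => sub_ne_zero.mpr (fun h => hxy i j h.symm)
    have hS : ∑ l ∈ Finset.univ.erase j,
          ∏ d ∈ (Finset.univ.erase j).erase l, (y j - y d)
        = (∏ l ∈ Finset.univ.erase j, (y j - y l))
            * ∑ l ∈ Finset.univ.erase j, 1 / (y j - y l) :=
      prod_mul_sum_inv _ _ (fun l hl =>
        sub_ne_zero.mpr (hy.ne (Ne.symm (Finset.mem_erase.mp hl).1)))
    have hP' : ∑ i, ∏ k ∈ Finset.univ.erase i, (y j - x k)
        = (∏ i, (y j - x i)) * ∑ i, 1 / (y j - x i) :=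
      prod_mul_sum_inv _ _ (fun i _ => sub_ne_zero.mpr (fun h => hxy i j h.symm))
    have hev : eval (y j) E =
        (2 * (∏ l ∈ Finset.univ.erase j, (y j - y l)) * ∏ i, (y j - x i))
          * (Λ ^ 2 * (∑ l ∈ Finset.univ.erase j, 1 / (y j - y l))
              - Λ * ∑ i, 1 / (y j - x i)) := by
      rw [hE]
      simp only [eval_add, eval_sub, eval_mul, eval_pow, eval_C, eval_ofNat,
        hqy j, mul_zero, zero_mul,
        eval_deriv2_at_root (Finset.univ : Finset (Fin m)) y (Finset.mem_univ j),
        eval_deriv_at_root (Finset.univ : Finset (Fin m)) y (Finset.mem_univ j)]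
      rw [hp, eval_prod]
      simp only [eval_sub, eval_X, eval_C]
      rw [eval_deriv_prod (Finset.univ : Finset (Fin n)) x (y j), hq,
        eval_deriv2_at_root (Finset.univ : Finset (Fin m)) y (Finset.mem_univ j),
        eval_deriv_at_root (Finset.univ : Finset (Fin m)) y (Finset.mem_univ j), hS, hP']
      ring
    rw [hev, mul_eq_zero]
    have hne : (2 * (∏ l ∈ Finset.univ.erase j, (y j - y l)) * ∏ i, (y j - x i)) ≠ 0 :=
      mul_ne_zero (mul_ne_zero two_ne_zero hBne) hPne
    simp [hne]
  constructor
  · intro h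
    refine ⟨fun i => (key1 i).mp ?_, fun j => (key2 j).mp ?_⟩ <;> rw [h] <;> simp
  · rintro ⟨h1, h2⟩
    rcases Nat.eq_zero_or_pos (n + m) with hnm | hnm
    · obtain rfl : n = 0 := by omega
      obtain rfl : m = 0 := by omega
      simp [hE, hp, hq, Finset.univ_eq_empty]
    -- degree bound
    have hpd : p.natDegree = n := by
      rw [hp, natDegree_prod _ _ (fun i _ => X_sub_C_ne_zero (x i))]
      simp
    have hqd : q.natDegree = m := by
      rw [hq, natDegree_prod _ _ (fun j _ => X_sub_C_ne_zero (y j))]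
      simp
    have hd1 : (derivative (derivative p) * q).natDegree < n + m := by
      by_cases h2n : 2 ≤ n
      · calc (derivative (derivative p) * q).natDegree
            ≤ (derivative (derivative p)).natDegree + q.natDegree := natDegree_mul_le
          _ ≤ (p.natDegree - 1 - 1) + q.natDegree := by
              gcongr
              exact (natDegree_derivative_le _).trans (Nat.sub_le_sub_right (natDegree_derivative_le p) 1)
          _ < n + m := by rw [hpd, hqd]; omega
      · have h0 : (derivative p).natDegree = 0 :=
          Nat.le_zero.mp ((natDegree_derivative_le p).trans (by omega))
        obtain ⟨c, hc⟩ := natDegree_eq_zero.mp h0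
        rw [← hc, derivative_C, zero_mul]
        simpa using hnm
    have hd2 : (2 * C Λ * derivative p * derivative q).natDegree < n + m := by
      by_cases hn : 1 ≤ n
      · by_cases hm : 1 ≤ m
        · calc (2 * C Λ * derivative p * derivative q).natDegree
              ≤ (2 * C Λ * derivative p).natDegree + (derivative q).natDegree :=
                natDegree_mul_le
            _ ≤ ((2 * C Λ).natDegree + (derivative p).natDegree) + (derivative q).natDegree := by
                gcongr; exact natDegree_mul_le
            _ ≤ (0 + (p.natDegree - 1)) + (q.natDegree - 1) := by
                gcongr
                · exact natDegree_mul_le.trans (by simp)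
                · exact natDegree_derivative_le p
                · exact natDegree_derivative_le q
            _ < n + m := by rw [hpd, hqd]; omega
        · have h0 : q.natDegree = 0 := by omega
          obtain ⟨c, hc⟩ := natDegree_eq_zero.mp h0
          rw [← hc, derivative_C, mul_zero]
          simpa using hnm
      · have h0 : p.natDegree = 0 := by omega
        obtain ⟨c, hc⟩ := natDegree_eq_zero.mp h0
        rw [← hc, derivative_C, mul_zero, zero_mul]
        simpa using hnm
    have hd3 : (C Λ ^ 2 * p * derivative (derivative q)).natDegree < n + m := by
      by_cases h2m : 2 ≤ m
      · calc (C Λ ^ 2 * p * derivative (derivative q)).natDegree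
            ≤ (C Λ ^ 2 * p).natDegree + (derivative (derivative q)).natDegree :=
              natDegree_mul_le
          _ ≤ ((C Λ ^ 2).natDegree + p.natDegree) + (q.natDegree - 1 - 1) := by
              gcongr
              · exact natDegree_mul_le
              · exact (natDegree_derivative_le _).trans
                  (Nat.sub_le_sub_right (natDegree_derivative_le q) 1)
          _ < n + m := by
              rw [hpd, hqd, ← C_pow, natDegree_C]
              omega
      · have h0 : (derivative q).natDegree = 0 :=
          Nat.le_zero.mp ((natDegree_derivative_le q).trans (by omega))
        obtain ⟨c, hc⟩ := natDegree_eq_zero.mp h0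
        rw [← hc, derivative_C, mul_zero]
        simpa using hnm
    have hdeg : E.natDegree < n + m := by
      rw [hE]
      calc (derivative (derivative p) * q - 2 * C Λ * derivative p * derivative q
            + C Λ ^ 2 * p * derivative (derivative q)).natDegree
          ≤ max (derivative (derivative p) * q
              - 2 * C Λ * derivative p * derivative q).natDegree
            (C Λ ^ 2 * p * derivative (derivative q)).natDegree := natDegree_add_le _ _
        _ ≤ max (max (derivative (derivative p) * q).natDegree
              (2 * C Λ * derivative p * derivative q).natDegree)
            (C Λ ^ 2 * p * derivative (derivative q)).natDegree := by
            gcongr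
            exact natDegree_sub_le _ _
        _ < n + m := by
            rw [Nat.max_lt, Nat.max_lt]
            exact ⟨⟨hd1, hd2⟩, hd3⟩
    have hinj : Function.Injective (Sum.elim x y) := by
      rintro (i | i) (j | j) h <;> simp only [Sum.elim_inl, Sum.elim_inr] at h
      · exact congrArg Sum.inl (hx h)
      · exact absurd h (hxy i j)
      · exact absurd h.symm (hxy j i)
      · exact congrArg Sum.inr (hy h)
    have heval : ∀ z : Fin n ⊕ Fin m, eval (Sum.elim x y z) E = 0 := by
      rintro (i | i)
      · exact (key1 i).mpr (h1 i)
      · exact (key2 i).mpr (h2 i)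
    exact Polynomial.eq_zero_of_natDegree_lt_card_of_eval_eq_zero E hinj heval
      (by simpa [Fintype.card_sum] using hdeg)
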